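/- Let Λ be a type and let 𝕋 := Tropical (WithTop ℝ) be the tropical semiring, equipped with the topology induced by Tropical.untrop from the order topology on WithTop ℝ. For all f, g ∈ MvPolynomial Λ 𝕋, the set {x : Λ → 𝕋 | MvPolynomial.eval x f = MvPolynomial.eval x g} is closed in the product topology on Λ → 𝕋. -/

import Mathlib

/-- The Euclidean topology on `WithTop ℝ`: the order topology. -/
noncomputable instance : TopologicalSpace (WithTop ℝ) := Preorder.topology (WithTop ℝ)

instance : OrderTopology (WithTop ℝ) := ⟨rfl⟩

/-- The Euclidean topology on the tropical semiring `𝕋 = Tropical (WithTop ℝ)`, induced by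
`untrop` from the order topology on `WithTop ℝ`. -/
noncomputable instance : TopologicalSpace (Tropical (WithTop ℝ)) :=
  TopologicalSpace.induced Tropical.untrop inferInstance

namespace TropicalAux

/-- The inclusion of `WithTop ℝ` into `EReal = WithBot (WithTop ℝ)`. -/
def toEReal : WithTop ℝ → EReal := fun x => (x : WithBot (WithTop ℝ))

lemma strictMono_toEReal : StrictMono toEReal := WithBot.coe_strictMono

lemma range_toEReal : Set.range toEReal = Set.Ioi (⊥ : EReal) := WithBot.range_coe

lemma isInducing_toEReal : Topology.IsInducing toEReal := by
  constructor
  exact (strictMono_toEReal.induced_topology_eq_preorder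
    (by rw [range_toEReal]; exact Set.ordConnected_Ioi)).symm

lemma continuous_toEReal : Continuous toEReal :=
  isInducing_toEReal.continuous

lemma toEReal_add (x y : WithTop ℝ) : toEReal (x + y) = toEReal x + toEReal y :=
  WithBot.coe_add x y

lemma toEReal_ne_bot (x : WithTop ℝ) : toEReal x ≠ ⊥ := WithBot.coe_ne_bot

instance : ContinuousAdd (WithTop ℝ) := by
  constructor
  rw [isInducing_toEReal.continuous_iff]
  have key : Continuous fun q : WithTop ℝ × WithTop ℝ => toEReal q.1 + toEReal q.2 := by
    rw [continuous_iff_continuousAt]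
    intro p
    have h2 : ContinuousAt (fun r : EReal × EReal => r.1 + r.2)
        (Prod.map toEReal toEReal p) :=
      EReal.continuousAt_add (Or.inr (toEReal_ne_bot p.2)) (Or.inl (toEReal_ne_bot p.1))
    exact h2.comp (continuous_toEReal.prodMap continuous_toEReal).continuousAt
  have : (toEReal ∘ fun p : WithTop ℝ × WithTop ℝ => p.1 + p.2) =
      fun q : WithTop ℝ × WithTop ℝ => toEReal q.1 + toEReal q.2 := by
    funext q; exact toEReal_add q.1 q.2
  rw [this]; exact key

end TropicalAux

lemma continuous_untrop : Continuous (Tropical.untrop : Tropical (WithTop ℝ) → WithTop ℝ) :=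
  continuous_induced_dom

instance : ContinuousAdd (Tropical (WithTop ℝ)) := by
  constructor
  apply continuous_induced_rng.mpr
  have : (Tropical.untrop ∘ fun p : Tropical (WithTop ℝ) × Tropical (WithTop ℝ) =>
      p.1 + p.2) =
      fun p => min (Tropical.untrop p.1) (Tropical.untrop p.2) := by
    funext p; exact Tropical.untrop_add p.1 p.2
  rw [this]
  exact (continuous_untrop.comp continuous_fst).min (continuous_untrop.comp continuous_snd)

instance : ContinuousMul (Tropical (WithTop ℝ)) := by
  constructor
  apply continuous_induced_rng.mpr
  have : (Tropical.untrop ∘ fun p : Tropical (WithTop ℝ) × Tropical (WithTop ℝ) =>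
      p.1 * p.2) =
      fun p => Tropical.untrop p.1 + Tropical.untrop p.2 := by
    funext p; exact Tropical.untrop_mul p.1 p.2
  rw [this]
  exact (continuous_untrop.comp continuous_fst).add (continuous_untrop.comp continuous_snd)

instance : T2Space (Tropical (WithTop ℝ)) :=
  .of_injective_continuous Tropical.injective_untrop continuous_untrop

lemma continuous_tropical_eval (Λ : Type*) (f : MvPolynomial Λ (Tropical (WithTop ℝ))) :
    Continuous fun x : Λ → Tropical (WithTop ℝ) => MvPolynomial.eval x f := by
  induction f using MvPolynomial.induction_on with
  | C a => simpa using continuous_const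
  | add p q hp hq => simp only [map_add]; exact hp.add hq
  | mul_X p n hp =>
      simp only [map_mul, MvPolynomial.eval_X]
      exact hp.mul (continuous_apply n)

/-- **Equalizer sets of tropical polynomials are Euclidean closed.**
For tropical polynomials `f, g` in variables `Λ`, the set of points of tropical affine space
`𝕋^Λ` where `f` and `g` agree is closed in the product (Euclidean) topology. -/
theorem isClosed_tropical_equalizer (Λ : Type*)
    (f g : MvPolynomial Λ (Tropical (WithTop ℝ))) :
    IsClosed {x : Λ → Tropical (WithTop ℝ) |
      MvPolynomial.eval x f = MvPolynomial.eval x g} := by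
  exact isClosed_eq (continuous_tropical_eval Λ f) (continuous_tropical_eval Λ g)
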